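/- Let n ≥ 3. Suppose given complex-valued functions on U: η, R^{iα} (1 ≤ i ≤ n, α ∈ Φ), R^{αβ} (α, β ∈ Φ with β = ±α), satisfying for all q ∈ U: (a) R^{α,−α} + R^{−α,α} = 0 for all α ∈ Φ; (b) −w′_α = η w_α + R^{−α,α} w_α − R^{αα} w_{−α} for all α ∈ Φ; (c) for all α, β ∈ Φ with α ≠ ±β: (Σ_i α_i R^{iβ}) w_α − (Σ_i β_i R^{iα}) w_β = c^β_{α,β−α}(R^{αα} w_{β−α} − R^{ββ} w_{α−β}) + c^β_{−α,β+α}(R^{−α,α} w_{β+α} + R^{−β,β} w_{β+α}), where terms whose subscript β∓α is not a root are absent. Then at every point of U: η = −(1/2)(R^{αα} + R^{−α,−α}) for every α ∈ Φ, and moreover η = 0. -/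

import Mathlib

open scoped Classical

noncomputable section

/-- The `i`-th standard basis vector of `ℝ^n`. -/
def stdE {n : ℕ} (i : Fin n) : Fin n → ℝ := fun k => if k = i then 1 else 0

/-- The set of roots of `gl_n`: `Φ = {e_i − e_j : i ≠ j}`. -/
def Phi (n : ℕ) : Set (Fin n → ℝ) :=
  {x | ∃ i j : Fin n, i ≠ j ∧ x = stdE i - stdE j}

/-- Euclidean dot product on `ℝ^n`. -/
def dotR {n : ℕ} (x y : Fin n → ℝ) : ℝ := ∑ k, x k * y k

/-- Structure constants of `gl_n`: for roots `α = e_a − e_b`, `γ = e_c − e_d` with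
`α + γ ∈ Φ`, `cst α γ = δ_{bc} − δ_{da}` (the coefficient of `e_{α+γ}` in
`[e_{ab}, e_{cd}] = δ_{bc} e_{ad} − δ_{da} e_{cb}`), and `cst α γ = 0` in every
other case (in particular when a subscript fails to be a root, so that terms
containing `cst` with a non-root subscript are absent). -/
def cst {n : ℕ} (α γ : Fin n → ℝ) : ℝ :=
  if α ∈ Phi n ∧ γ ∈ Phi n ∧ α + γ ∈ Phi n then
    (∑ k, max (-(α k)) 0 * max (γ k) 0) - (∑ k, max (α k) 0 * max (-(γ k)) 0)
  else 0

/-- Sum of a quantity over all roots `α ∈ Φ` (each root `e_i − e_j`, `i ≠ j`,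
occurring exactly once). -/
def sumPhi {n : ℕ} (f : (Fin n → ℝ) → ℂ) : ℂ :=
  ∑ p ∈ (Finset.univ : Finset (Fin n)).offDiag, f (stdE p.1 - stdE p.2)

/-- `z(x) = w″(x)/(2 w(x))`. -/
def zfun (w : ℝ → ℂ) (x : ℝ) : ℂ := deriv (deriv w) x / (2 * w x)

lemma max_neg_sub_std {n : ℕ} {i j : Fin n} (hij : i ≠ j) (m : Fin n) :
    max (-((stdE i - stdE j) m)) 0 = stdE j m := by
  by_cases h1 : m = i <;> by_cases h2 : m = j <;>
    simp_all [stdE] <;> norm_num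

lemma max_sub_std {n : ℕ} {i j : Fin n} (hij : i ≠ j) (m : Fin n) :
    max ((stdE i - stdE j) m) 0 = stdE i m := by
  by_cases h1 : m = i <;> by_cases h2 : m = j <;>
    simp_all [stdE] <;> norm_num

lemma sum_std_mul {n : ℕ} (j k : Fin n) :
    ∑ m, stdE j m * stdE k m = if j = k then (1:ℝ) else 0 := by
  simp only [stdE, ite_mul, one_mul, zero_mul]
  rw [Finset.sum_ite_eq' Finset.univ j (fun m => if m = k then (1:ℝ) else 0)]
  simp [eq_comm]

lemma cst_val {n : ℕ} {i j k l : Fin n} (hij : i ≠ j) (hkl : k ≠ l)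
    (hmem : stdE i - stdE j + (stdE k - stdE l) ∈ Phi n) :
    cst (stdE i - stdE j) (stdE k - stdE l)
      = (if j = k then (1:ℝ) else 0) - (if i = l then 1 else 0) := by
  have hcond : (stdE i - stdE j : Fin n → ℝ) ∈ Phi n ∧ (stdE k - stdE l : Fin n → ℝ) ∈ Phi n ∧
      stdE i - stdE j + (stdE k - stdE l) ∈ Phi n :=
    ⟨⟨i, j, hij, rfl⟩, ⟨k, l, hkl, rfl⟩, hmem⟩
  simp only [cst, if_pos hcond]
  simp only [max_neg_sub_std hij, max_sub_std hij, max_neg_sub_std hkl, max_sub_std hkl]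
  rw [sum_std_mul, sum_std_mul]

lemma not_mem_phi {n : ℕ} (x : Fin n → ℝ) (k : Fin n) (h : 1 < |x k|) : x ∉ Phi n := by
  rintro ⟨i, j, hij, rfl⟩
  simp only [Pi.sub_apply, stdE] at h
  split_ifs at h <;> norm_num at h

/-- Under momentum independence, `η = −(1/2)(R^{αα} + R^{−α,−α})` and `η = 0`. -/
theorem statement2
    (n : ℕ) (hn : 3 ≤ n)
    (D : Set ℝ) (hDopen : IsOpen D) (hD0 : (0:ℝ) ∉ D) (hDsymm : ∀ x ∈ D, -x ∈ D)
    (w : ℝ → ℂ) (hw : ContDiffOn ℝ 2 w D) (hwne : ∀ x ∈ D, w x ≠ 0)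
    (hwodd : ∀ x ∈ D, w (-x) = -w x)
    (U : Set (Fin n → ℝ)) (hUne : U.Nonempty) (hUconv : Convex ℝ U)
    (hUopen : IsOpen U) (hUD : ∀ q ∈ U, ∀ α ∈ Phi n, dotR α q ∈ D)
    (η : (Fin n → ℝ) → ℂ)
    (RhR : Fin n → (Fin n → ℝ) → (Fin n → ℝ) → ℂ)
    (Rsame Ropp : (Fin n → ℝ) → (Fin n → ℝ) → ℂ)
    (ha : ∀ q ∈ U, ∀ α ∈ Phi n, Ropp α q + Ropp (-α) q = 0)
    (hb : ∀ q ∈ U, ∀ α ∈ Phi n,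
      -(deriv w (dotR α q)) =
        η q * w (dotR α q) + Ropp (-α) q * w (dotR α q)
          - Rsame α q * w (dotR (-α) q))
    (hc : ∀ q ∈ U, ∀ α ∈ Phi n, ∀ β ∈ Phi n, α ≠ β → α ≠ -β →
      (∑ i, (α i : ℂ) * RhR i β q) * w (dotR α q)
          - (∑ i, (β i : ℂ) * RhR i α q) * w (dotR β q) =
        (cst α (β - α) : ℂ) *
            (Rsame α q * w (dotR (β - α) q) - Rsame β q * w (dotR (α - β) q))
          + (cst (-α) (β + α) : ℂ) *
              (Ropp (-α) q * w (dotR (β + α) q) + Ropp (-β) q * w (dotR (β + α) q))) :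
    ∀ q ∈ U,
      (∀ α ∈ Phi n, η q = -(1/2) * (Rsame α q + Rsame (-α) q)) ∧ η q = 0 := by
  -- evenness of deriv w on D
  have hderiv : ∀ x ∈ D, deriv w (-x) = deriv w x := by
    intro x hx
    have h1 : (fun y => w (-y)) =ᶠ[nhds x] fun y => -w y := by
      filter_upwards [hDopen.mem_nhds hx] with y hy using hwodd y hy
    have h2 := h1.deriv_eq
    rw [deriv_comp_neg w x, deriv.fun_neg] at h2
    exact neg_injective h2
  intro q hq
  have hdotneg : ∀ α : Fin n → ℝ, dotR (-α) q = -dotR α q := by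
    intro α
    simp only [dotR, Pi.neg_apply, neg_mul]
    exact Finset.sum_neg_distrib _
  have memneg : ∀ α ∈ Phi n, -α ∈ Phi n := by
    rintro _ ⟨i, j, hij, rfl⟩
    exact ⟨j, i, hij.symm, by abel⟩
  -- Part 1
  have key1 : ∀ α ∈ Phi n, 2 * η q + (Rsame α q + Rsame (-α) q) = 0 := by
    intro α hα
    have hx : dotR α q ∈ D := hUD q hq α hα
    have e1 := hb q hq α hα
    have e2 := hb q hq (-α) (memneg α hα)
    rw [neg_neg] at e2
    rw [hdotneg] at e1
    rw [hdotneg] at e2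
    rw [hwodd _ hx] at e1
    rw [hderiv _ hx, hwodd _ hx] at e2
    have ha' := ha q hq α hα
    have hz : (2 * η q + (Rsame α q + Rsame (-α) q)) * w (dotR α q) = 0 := by
      linear_combination e2 - e1 - w (dotR α q) * ha'
    exact (mul_eq_zero.mp hz).resolve_right (hwne _ hx)
  refine ⟨fun α hα => by linear_combination (1/2 : ℂ) * key1 α hα, ?_⟩
  -- Part 2
  have h0 : (0 : ℕ) < n := by omega
  have h1 : (1 : ℕ) < n := by omega
  have h2 : (2 : ℕ) < n := by omega
  set a : Fin n := ⟨0, h0⟩ with ha_def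
  set b : Fin n := ⟨1, h1⟩ with hb_def
  set c : Fin n := ⟨2, h2⟩ with hc_def
  have hab : a ≠ b := Fin.ne_of_val_ne (by norm_num)
  have hac : a ≠ c := Fin.ne_of_val_ne (by norm_num)
  have hbc : b ≠ c := Fin.ne_of_val_ne (by norm_num)
  have hdot : ∀ i j : Fin n, dotR (stdE i - stdE j) q = q i - q j := by
    intro i j
    simp only [dotR, Pi.sub_apply, sub_mul, stdE, ite_mul, one_mul, zero_mul]
    rw [Finset.sum_sub_distrib,
      Finset.sum_ite_eq' Finset.univ i (fun m => q m),
      Finset.sum_ite_eq' Finset.univ j (fun m => q m)]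
    simp
  have hmemD : ∀ i j : Fin n, i ≠ j → q i - q j ∈ D := by
    intro i j hij
    have := hUD q hq _ ⟨i, j, hij, rfl⟩
    rwa [hdot i j] at this
  -- memberships
  have hαΦ : (stdE a - stdE b : Fin n → ℝ) ∈ Phi n := ⟨a, b, hab, rfl⟩
  have hβΦ : (stdE a - stdE c : Fin n → ℝ) ∈ Phi n := ⟨a, c, hac, rfl⟩
  -- inequalities
  have hne1 : (stdE a - stdE b : Fin n → ℝ) ≠ stdE a - stdE c := by
    intro h
    have h2 := congrFun h b
    norm_num [stdE, Ne.symm hab, hbc] at h2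
  have hne2 : (stdE a - stdE b : Fin n → ℝ) ≠ -(stdE a - stdE c) := by
    intro h
    have h2 := congrFun h a
    norm_num [stdE, hab, hac] at h2
  -- instantiate (c) four times
  have E1 := hc q hq (stdE a - stdE b) hαΦ (stdE a - stdE c) hβΦ hne1 hne2
  have E2 := hc q hq (-(stdE a - stdE b)) (memneg _ hαΦ) (-(stdE a - stdE c)) (memneg _ hβΦ)
    (fun h => hne1 (neg_injective h)) (fun h => hne2 (neg_injective h))
  have E3 := hc q hq (stdE a - stdE b) hαΦ (-(stdE a - stdE c)) (memneg _ hβΦ)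
    hne2 (fun h => hne1 (by rwa [neg_neg] at h))
  have E4 := hc q hq (-(stdE a - stdE b)) (memneg _ hαΦ) (stdE a - stdE c) hβΦ
    (fun h => hne2 (neg_eq_iff_eq_neg.mp h))
    (fun h => hne1 (neg_injective h ▸ rfl) )
  -- part 1 and (a) instances
  have kα := key1 _ hαΦ
  have kβ := key1 _ hβΦ
  have hhα := ha q hq _ hαΦ
  have hhβ := ha q hq _ hβΦ
  -- clean up double negations
  rw [neg_neg] at E2 E3 E4
  -- replace -(x - y) by y - x everywhere
  have nrw1 : -(stdE a - stdE b : Fin n → ℝ) = stdE b - stdE a := neg_sub _ _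
  have nrw2 : -(stdE a - stdE c : Fin n → ℝ) = stdE c - stdE a := neg_sub _ _
  rw [nrw1] at E1 E2 E3 E4 kα hhα
  rw [nrw2] at E2 E3 E4 kβ hhβ
  -- normalize compound root expressions
  rw [show (stdE a - stdE c - (stdE a - stdE b) : Fin n → ℝ) = stdE b - stdE c by abel,
      show (stdE a - stdE b - (stdE a - stdE c) : Fin n → ℝ) = stdE c - stdE b by abel] at E1
  rw [show (stdE c - stdE a - (stdE b - stdE a) : Fin n → ℝ) = stdE c - stdE b by abel,
      show (stdE b - stdE a - (stdE c - stdE a) : Fin n → ℝ) = stdE b - stdE c by abel] at E2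
  rw [show (stdE c - stdE a + (stdE a - stdE b) : Fin n → ℝ) = stdE c - stdE b by abel] at E3
  rw [show (stdE a - stdE c - (stdE b - stdE a) : Fin n → ℝ)
        = stdE a - stdE c + (stdE a - stdE b) by abel,
      show (stdE a - stdE c + (stdE b - stdE a) : Fin n → ℝ) = stdE b - stdE c by abel] at E4
  -- normalize sums
  have hsum : ∀ (i j : Fin n) (γ : Fin n → ℝ),
      (∑ m, ((stdE j - stdE i) m : ℂ) * RhR m γ q)
        = -∑ m, ((stdE i - stdE j) m : ℂ) * RhR m γ q := by
    intro i j γ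
    rw [← Finset.sum_neg_distrib]
    refine Finset.sum_congr rfl fun m _ => ?_
    simp only [Pi.sub_apply, Complex.ofReal_sub]
    ring
  rw [hsum a b, hsum a c] at E2
  rw [hsum a c] at E3
  rw [hsum a b] at E4
  -- cst values
  have c1 : cst (stdE a - stdE b) (stdE b - stdE c) = 1 := by
    rw [cst_val hab hbc (by
      rw [show (stdE a - stdE b + (stdE b - stdE c) : Fin n → ℝ) = stdE a - stdE c by abel]
      exact hβΦ)]
    simp [hac]
  have c2 : cst (stdE b - stdE a) (stdE c - stdE b) = -1 := by
    rw [cst_val (Ne.symm hab) (Ne.symm hbc) (by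
      rw [show (stdE b - stdE a + (stdE c - stdE b) : Fin n → ℝ) = stdE c - stdE a by abel]
      exact ⟨c, a, Ne.symm hac, rfl⟩)]
    simp [hac]
  have cz1 : cst (stdE b - stdE a) (stdE a - stdE c + (stdE a - stdE b)) = 0 := by
    simp only [cst]
    rw [if_neg]
    rintro ⟨-, h, -⟩
    exact not_mem_phi _ a (by norm_num [stdE, hab, hac]) h
  have cz2 : cst (stdE a - stdE b) (stdE c - stdE a + (stdE b - stdE a)) = 0 := by
    simp only [cst]
    rw [if_neg]
    rintro ⟨-, h, -⟩
    exact not_mem_phi _ a (by norm_num [stdE, hab, hac]) h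
  have cz3 : cst (stdE a - stdE b) (stdE c - stdE a - (stdE a - stdE b)) = 0 := by
    simp only [cst]
    rw [if_neg]
    rintro ⟨-, h, -⟩
    exact not_mem_phi _ a (by norm_num [stdE, hab, hac]) h
  rw [c1, cz1] at E1
  rw [c2, cz2] at E2
  rw [cz3, c2] at E3
  rw [cz1, c1] at E4
  -- dot products
  rw [hdot a b, hdot a c, hdot b c, hdot c b] at E1
  rw [hdot b a, hdot c a, hdot c b, hdot b c] at E2
  rw [hdot a b, hdot c a, hdot c b] at E3
  rw [hdot b a, hdot a c, hdot b c] at E4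
  -- oddness of w
  have ow1 : w (q c - q b) = -w (q b - q c) := by
    rw [show q c - q b = -(q b - q c) by ring]
    exact hwodd _ (hmemD b c hbc)
  have ow2 : w (q b - q a) = -w (q a - q b) := by
    rw [show q b - q a = -(q a - q b) by ring]
    exact hwodd _ (hmemD a b hab)
  have ow3 : w (q c - q a) = -w (q a - q c) := by
    rw [show q c - q a = -(q a - q c) by ring]
    exact hwodd _ (hmemD a c hac)
  rw [ow1] at E1
  rw [ow1, ow2, ow3] at E2
  rw [ow1, ow3] at E3
  rw [ow2] at E4
  push_cast at E1 E2 E3 E4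
  have hWne : w (q b - q c) ≠ 0 := hwne _ (hmemD b c hbc)
  have hz : (4 : ℂ) * (η q * w (q b - q c)) = 0 := by
    linear_combination E1 + E2 - E3 - E4 + w (q b - q c) * kα + w (q b - q c) * kβ
      - w (q b - q c) * hhα - w (q b - q c) * hhβ
  rcases mul_eq_zero.mp hz with h | h
  · norm_num at h
  · exact (mul_eq_zero.mp h).resolve_right hWne

end
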